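/- If S is an invertible n×n equiangular matrix with parameter α ∈ (0,1), n ≥ 2, then the cosine of the angle between any two distinct rows of S⁻¹ equals α' = -α/(1+(n-2)α), which is negative; i.e., the rows of S⁻¹ are equiangular with angle greater than π/2. -/

import Mathlib

open Matrix
open scoped RealInnerProductSpace

noncomputable def Gmat (n : ℕ) (α : ℝ) : Matrix (Fin n) (Fin n) ℝ :=
  (1 - α) • (1 : Matrix (Fin n) (Fin n) ℝ) + α • (Matrix.of fun _ _ => (1 : ℝ))

noncomputable def invRow (n : ℕ) (S : Matrix (Fin n) (Fin n) ℝ) (i : Fin n) :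
    EuclideanSpace ℝ (Fin n) :=
  (WithLp.equiv 2 (Fin n → ℝ)).symm (fun k => S⁻¹ i k)

/-- The rows of `S⁻¹` are equiangular with cosine `α' = -α/(1+(n-2)α) < 0`,
i.e. the angle between any two distinct rows exceeds `π/2`. -/
theorem stmt5 (n : ℕ) (hn : 2 ≤ n) (α : ℝ) (hα₁ : 0 < α) (hα₂ : α < 1)
    (S : Matrix (Fin n) (Fin n) ℝ) (hS : IsUnit S.det)
    (hEq : Sᵀ * S = Gmat n α) :
    (∀ i j : Fin n, i ≠ j →
      ⟪invRow n S i, invRow n S j⟫ / (‖invRow n S i‖ * ‖invRow n S j‖)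
        = -α / (1 + ((n : ℝ) - 2) * α)) ∧
    -α / (1 + ((n : ℝ) - 2) * α) < 0 := by
  have hn' : (2:ℝ) ≤ (n:ℝ) := by exact_mod_cast hn
  have h1 : (0:ℝ) < 1 - α := by linarith
  have h2 : (0:ℝ) < 1 + ((n:ℝ)-1)*α := by nlinarith
  have h3 : (0:ℝ) < 1 + ((n:ℝ)-2)*α := by nlinarith
  have h1' : (1:ℝ) - α ≠ 0 := h1.ne'
  have h2' : (1:ℝ) + α * ((n:ℝ)-1) ≠ 0 := by nlinarith
  have h3' : (1:ℝ) + α * ((n:ℝ)-2) ≠ 0 := by nlinarith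
  set a : ℝ := 1/(1-α) with ha
  set b : ℝ := -α/((1-α)*(1+((n:ℝ)-1)*α)) with hb
  set Ginv : Matrix (Fin n) (Fin n) ℝ :=
    a • (1 : Matrix (Fin n) (Fin n) ℝ) + b • (Matrix.of fun _ _ => (1:ℝ)) with hGinvdef
  have hGinv : Ginv * Gmat n α = 1 := by
    ext i j
    simp only [hGinvdef, Gmat, Matrix.add_mul, Matrix.mul_add, Matrix.add_apply, Matrix.smul_mul,
      Matrix.mul_smul, Matrix.smul_apply, Matrix.one_mul, Matrix.mul_one, smul_eq_mul]
    rw [Matrix.mul_apply]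
    simp only [Matrix.of_apply, Matrix.one_apply]
    by_cases h : i = j <;> simp [h, ha, hb, Finset.sum_const, Finset.card_fin] <;>
      field_simp <;> ring
  have hGunit : IsUnit (Gmat n α).det := by
    rw [← hEq]
    rw [Matrix.det_mul, Matrix.det_transpose]
    exact hS.mul hS
  have hGeq : (Gmat n α)⁻¹ = Ginv := Matrix.inv_eq_left_inv hGinv
  have hKey : S⁻¹ * (S⁻¹)ᵀ = Ginv := by
    rw [Matrix.transpose_nonsing_inv, ← Matrix.mul_inv_rev, hEq, hGeq]
  have hInner : ∀ i j : Fin n, ⟪invRow n S i, invRow n S j⟫ = (S⁻¹ * (S⁻¹)ᵀ) i j := by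
    intro i j
    rw [Matrix.mul_apply]
    simp [invRow, PiLp.inner_apply, RCLike.inner_apply, Matrix.transpose_apply, mul_comm]
  set c : ℝ := a + b with hc
  have hcval : c = (1 + ((n:ℝ)-2)*α) / ((1-α)*(1+((n:ℝ)-1)*α)) := by
    rw [hc, ha, hb]; field_simp; ring
  have hcpos : 0 < c := by
    rw [hcval]; positivity
  have hnormsq : ∀ i : Fin n, ⟪invRow n S i, invRow n S i⟫ = c := by
    intro i
    rw [hInner, hKey, hGinvdef]
    simp [Matrix.one_apply, hc]
  have hnorm : ∀ i : Fin n, ‖invRow n S i‖ = Real.sqrt c := by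
    intro i
    rw [norm_eq_sqrt_real_inner, hnormsq]
  constructor
  · intro i j hij
    rw [hInner, hKey, hGinvdef]
    have hij' : (1 : Matrix (Fin n) (Fin n) ℝ) i j = 0 := Matrix.one_apply_ne hij
    simp only [Matrix.add_apply, Matrix.smul_apply, Matrix.of_apply, hij', smul_eq_mul,
      mul_zero, mul_one, zero_add, hnorm, Real.mul_self_sqrt hcpos.le]
    rw [hb, hcval]
    field_simp
  · apply div_neg_of_neg_of_pos <;> linarith
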